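/- Suppose L and L_s arise from samples of a rational function H and the pencil (L_s, L) is regular (i.e., det(L_s - sL) is not identically zero and L is invertible at the interpolation points); define H̃(s) = W (L_s - s L)^{-1} V. Then H̃ interpolates the data: H̃(μ_i) = v_i and H̃(λ_j) = w_j for all i, j, whenever L_s - μ_i L and L_s - λ_j L are invertible. -/
import Mathlib


/-- The Loewner interpolant `H̃(s) = W (Lₛ - s L)⁻¹ V` interpolates the data:
`H̃(μᵢ) = vᵢ` and `H̃(λⱼ) = wⱼ`, provided `Lₛ - μᵢ L` and `Lₛ - λⱼ L`
are invertible. -/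
theorem loewner_interpolant_interpolates
    (n : ℕ) (μ lam : Fin n → ℂ) (v w : Fin n → ℂ)
    (hμ : Function.Injective μ) (hlam : Function.Injective lam)
    (hne : ∀ i j, μ i ≠ lam j)
    (L Ls : Matrix (Fin n) (Fin n) ℂ)
    (hL : ∀ i j, L i j = (v i - w j) / (μ i - lam j))
    (hLs : ∀ i j, Ls i j = (μ i * v i - lam j * w j) / (μ i - lam j))
    (V : Matrix (Fin n) (Fin 1) ℂ) (hV : ∀ i, V i 0 = v i)
    (W : Matrix (Fin 1) (Fin n) ℂ) (hW : ∀ j, W 0 j = w j)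
    (hinvμ : ∀ i, IsUnit (Ls - μ i • L))
    (hinvlam : ∀ j, IsUnit (Ls - lam j • L))
    (Htilde : ℂ → ℂ)
    (hH : ∀ s, Htilde s = (W * (Ls - s • L)⁻¹ * V) 0 0) :
    (∀ i, Htilde (μ i) = v i) ∧ (∀ j, Htilde (lam j) = w j) := by
  constructor
  · intro i
    set M := Ls - μ i • L with hM
    have hdet : IsUnit M.det := (Matrix.isUnit_iff_isUnit_det M).mp (hinvμ i)
    have hrow : ∀ j, M i j = w j := by
      intro j
      have hd : μ i - lam j ≠ 0 := sub_ne_zero.mpr (hne i j)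
      simp only [hM, Matrix.sub_apply, Matrix.smul_apply, hL, hLs, smul_eq_mul]
      field_simp
      ring
    rw [hH, Matrix.mul_assoc]
    have key : (W * (M⁻¹ * V)) 0 0 = (M * (M⁻¹ * V)) i 0 := by
      simp only [Matrix.mul_apply]
      exact Finset.sum_congr rfl fun j _ => by rw [hW, hrow]
    rw [key, ← Matrix.mul_assoc, Matrix.mul_nonsing_inv _ hdet, Matrix.one_mul, hV]
  · intro j
    set M := Ls - lam j • L with hM
    have hdet : IsUnit M.det := (Matrix.isUnit_iff_isUnit_det M).mp (hinvlam j)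
    have hcol : ∀ k, M k j = v k := by
      intro k
      have hd : μ k - lam j ≠ 0 := sub_ne_zero.mpr (hne k j)
      simp only [hM, Matrix.sub_apply, Matrix.smul_apply, hL, hLs, smul_eq_mul]
      field_simp
      ring
    have hinner : ∀ k, (M⁻¹ * V) k 0 = (1 : Matrix (Fin n) (Fin n) ℂ) k j := by
      intro k
      rw [← Matrix.nonsing_inv_mul M hdet]
      simp only [Matrix.mul_apply]
      exact Finset.sum_congr rfl fun l _ => by rw [hV, hcol]
    rw [hH, Matrix.mul_assoc]
    calc (W * (M⁻¹ * V)) 0 0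
        = ∑ k, W 0 k * (1 : Matrix (Fin n) (Fin n) ℂ) k j := by
          simp only [Matrix.mul_apply, hinner]
      _ = W 0 j := by simp [Matrix.one_apply]
      _ = w j := hW j
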